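/- For all constants μ > 0, c₀ > 0, c₁ > 0, c₂ > 0 and every B ∈ (0,1), the equation (c₁/(2c₀) - 1)·ln((1-A)/(1+A)) + (2/(1+A))·(c₁/(2c₀) + A/(1-A)) = c₁/(c₀·(1-B²)) has exactly one solution A in the open interval (0,1). -/

import Mathlib

open Real Set

set_option maxHeartbeats 1600000 in
private lemma eqA_key (k T : ℝ) (hk : 0 < k) (hT : 2 * k < T) :
    ∃! A : ℝ, A ∈ Set.Ioo (0:ℝ) 1 ∧
      (k - 1) * Real.log ((1 - A) / (1 + A)) + (2 / (1 + A)) * (k + A / (1 - A)) = T := by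
  obtain ⟨g, hgdef⟩ : ∃ g : ℝ → ℝ, g = fun A => (k - 1) * Real.log (1 - A)
      - (k - 1) * Real.log (1 + A) + 2 * k / (1 + A) + 2 * A / ((1 - A) * (1 + A)) := ⟨_, rfl⟩
  -- rewriting the equation in terms of g
  have hgeq : ∀ A ∈ Ioo (0:ℝ) 1,
      (k - 1) * Real.log ((1 - A) / (1 + A)) + (2 / (1 + A)) * (k + A / (1 - A)) = g A := by
    rintro A ⟨h0, h1⟩
    have h1A : (1:ℝ) - A ≠ 0 := by intro h; linarith
    have h1A' : (1:ℝ) + A ≠ 0 := by intro h; linarith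
    simp only [hgdef]
    rw [Real.log_div h1A h1A']
    field_simp
    ring
  -- value at 0
  have hg0 : g 0 = 2 * k := by
    simp only [hgdef]
    norm_num
  -- derivative
  have hderiv : ∀ A ∈ Ioo (-1:ℝ) 1,
      HasDerivAt g (4 * (1 - k + k * A) / ((1 - A) ^ 2 * (1 + A) ^ 2)) A := by
    rintro A ⟨hm1, h1⟩
    have h1A : (0:ℝ) < 1 - A := by linarith
    have h1A' : (0:ℝ) < 1 + A := by linarith
    have d1 : HasDerivAt (fun x : ℝ => 1 - x) (-1) A := by
      simpa using (hasDerivAt_id A).const_sub 1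
    have d2 : HasDerivAt (fun x : ℝ => 1 + x) 1 A := by
      simpa using (hasDerivAt_id A).const_add 1
    have l1 := (d1.log h1A.ne').const_mul (k - 1)
    have l2 := (d2.log h1A'.ne').const_mul (k - 1)
    have l3 := (hasDerivAt_const A (2 * k)).div d2 h1A'.ne'
    have l4 := ((hasDerivAt_id A).const_mul 2).div (d1.mul d2)
      (by nlinarith : (1 - A) * (1 + A) ≠ 0)
    rw [hgdef]
    have := ((l1.sub l2).add l3).add l4
    refine this.congr_deriv ?_
    simp only [id, Pi.mul_apply]
    field_simp
    ring
  -- the turning point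
  obtain ⟨m, hmdef⟩ : ∃ m : ℝ, m = max 0 ((k - 1) / k) := ⟨_, rfl⟩
  have hm0 : 0 ≤ m := hmdef ▸ le_max_left _ _
  have hm1 : m < 1 := by
    have h : (k - 1) / k < 1 := by
      rw [div_lt_one hk]; linarith
    rw [hmdef]; exact max_lt one_pos h
  -- continuity of g on [0,1)
  have hcont : ContinuousOn g (Ico (0:ℝ) 1) := by
    rw [hgdef]
    apply ContinuousOn.add
    apply ContinuousOn.add
    apply ContinuousOn.sub
    · exact continuousOn_const.mul ((continuousOn_const.sub continuousOn_id).log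
        (fun x hx => by rcases hx with ⟨a, b⟩; (try simp only [Pi.sub_apply, Pi.add_apply, id_eq]); intro h; linarith))
    · exact continuousOn_const.mul ((continuousOn_const.add continuousOn_id).log
        (fun x hx => by rcases hx with ⟨a, b⟩; (try simp only [Pi.sub_apply, Pi.add_apply, id_eq]); intro h; linarith))
    · exact continuousOn_const.div (continuousOn_const.add continuousOn_id)
        (fun x hx => by rcases hx with ⟨a, b⟩; (try simp only [id_eq]); intro h; linarith)
    · exact (continuousOn_const.mul continuousOn_id).div
        ((continuousOn_const.sub continuousOn_id).mul (continuousOn_const.add continuousOn_id))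
        (fun x hx => by
          rcases hx with ⟨a, b⟩
          exact ne_of_gt (mul_pos (by linarith) (by linarith)))
  -- strict monotonicity on [m, 1)
  have hmono : StrictMonoOn g (Ico m 1) := by
    apply strictMonoOn_of_deriv_pos (convex_Ico m 1)
      (hcont.mono (fun x hx => ⟨le_trans hm0 hx.1, hx.2⟩))
    intro x hx
    rw [interior_Ico] at hx
    rcases hx with ⟨hxm, hx1⟩
    have hx0 : 0 ≤ x := le_trans hm0 hxm.le
    have hdx := (hderiv x ⟨by linarith, hx1⟩).deriv
    rw [hdx]
    have hnum : 0 < 1 - k + k * x := by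
      have h1 : (k - 1) / k < x := lt_of_le_of_lt (hmdef ▸ le_max_right 0 ((k - 1) / k)) hxm
      have h2 := (div_lt_iff₀ hk).mp h1
      nlinarith
    have hden : (0:ℝ) < (1 - x) ^ 2 * (1 + x) ^ 2 :=
      mul_pos (pow_pos (by linarith) 2) (pow_pos (by linarith) 2)
    exact div_pos (by linarith) hden
  -- strict antitonicity on [0, m]
  have hanti : StrictAntiOn g (Icc 0 m) := by
    apply strictAntiOn_of_deriv_neg (convex_Icc 0 m)
      (hcont.mono (fun x hx => ⟨hx.1, lt_of_le_of_lt hx.2 hm1⟩))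
    intro x hx
    rw [interior_Icc] at hx
    rcases hx with ⟨hx0, hxm⟩
    have hx1 : x < 1 := lt_trans hxm hm1
    have hdx := (hderiv x ⟨by linarith, hx1⟩).deriv
    rw [hdx]
    have hnum : 1 - k + k * x < 0 := by
      have hxk : x < (k - 1) / k := by
        rcases lt_max_iff.mp (hmdef ▸ hxm) with h | h
        · linarith
        · exact h
      have h2 := (lt_div_iff₀ hk).mp hxk
      nlinarith
    have hden : (0:ℝ) < (1 - x) ^ 2 * (1 + x) ^ 2 :=
      mul_pos (pow_pos (by linarith) 2) (pow_pos (by linarith) 2)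
    exact div_neg_of_neg_of_pos (by linarith) hden
  -- every solution lies strictly above m
  have habove : ∀ A ∈ Ioo (0:ℝ) 1, g A = T → m < A := by
    rintro A ⟨hA0, hA1⟩ hgA
    by_contra h
    push_neg at h
    have h0m : (0:ℝ) ∈ Icc (0:ℝ) m := ⟨le_refl _, le_trans hA0.le h⟩
    have hAm : A ∈ Icc (0:ℝ) m := ⟨hA0.le, h⟩
    have := hanti h0m hAm hA0
    rw [hg0, hgA] at this
    linarith
  -- the witness point where g exceeds T
  obtain ⟨M, hMdef⟩ : ∃ M : ℝ, M = max (2 * (k + 1) + 1) (T + k + 3) := ⟨_, rfl⟩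
  have hMk : 2 * (k + 1) + 1 ≤ M := hMdef ▸ le_max_left _ _
  have hMT : T + k + 3 ≤ M := hMdef ▸ le_max_right _ _
  have hM1 : 1 ≤ M := by nlinarith
  have hM0 : 0 < M := by linarith
  obtain ⟨s, hsdef⟩ : ∃ s : ℝ, s = 1 / M := ⟨_, rfl⟩
  have hs0 : 0 < s := by rw [hsdef]; positivity
  have hsM : s * M = 1 := by rw [hsdef]; field_simp
  have hs1 : s ≤ 1 := by nlinarith [mul_le_mul_of_nonneg_left hM1 hs0.le]
  have hs2le : s ^ 2 ≤ 1 := by nlinarith [mul_le_mul_of_nonneg_left hs1 hs0.le]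
  have hs2 : 1 / s ^ 2 = M ^ 2 := by
    rw [hsdef]; field_simp
  obtain ⟨A₂, hA₂def⟩ : ∃ A₂ : ℝ, A₂ = 1 - s ^ 2 := ⟨_, rfl⟩
  have hA₂1 : A₂ < 1 := by rw [hA₂def]; nlinarith [pow_pos hs0 2]
  have hA₂0 : 0 ≤ A₂ := by rw [hA₂def]; linarith [hs2le]
  have hA₂m : m ≤ A₂ := by
    have hM2k : k ≤ M ^ 2 := by nlinarith [mul_le_mul_of_nonneg_left hM1 hM0.le]
    have h2 : s ^ 2 * M ^ 2 = 1 := by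
      rw [show s ^ 2 * M ^ 2 = (s * M) ^ 2 by ring, hsM, one_pow]
    have ek : s ^ 2 * k ≤ 1 := by nlinarith [mul_nonneg (sq_nonneg s) (sub_nonneg.mpr hM2k)]
    rw [hmdef]
    apply max_le hA₂0
    rw [div_le_iff₀ hk, hA₂def]
    nlinarith [ek]
  -- g A₂ > T
  have hbig : T < g A₂ := by
    have hlogs : Real.log s ≤ 0 := Real.log_nonpos hs0.le hs1
    have hlogs2 : -Real.log s ≤ 1 / s - 1 := by
      have := Real.log_le_sub_one_of_pos (show (0:ℝ) < 1 / s by positivity)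
      rwa [Real.log_div one_ne_zero hs0.ne', Real.log_one, zero_sub] at this
    have h2s : (0:ℝ) < 2 - s ^ 2 := by linarith [hs2le]
    have hlog2s : Real.log (2 - s ^ 2) ≤ 1 := by
      have h1 := Real.log_le_sub_one_of_pos h2s
      linarith [sq_nonneg s]
    have hlog2s0 : 0 ≤ Real.log (2 - s ^ 2) := by
      apply Real.log_nonneg; linarith [hs2le]
    have hls : Real.log (s ^ 2) = 2 * Real.log s := by
      rw [Real.log_pow]; push_cast; ring
    have h1 : 1 - A₂ = s ^ 2 := by rw [hA₂def]; ring
    have h2 : 1 + A₂ = 2 - s ^ 2 := by rw [hA₂def]; ring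
    have hA₂expand : g A₂ = (k - 1) * (2 * Real.log s) - (k - 1) * Real.log (2 - s ^ 2)
        + 2 * k / (2 - s ^ 2) + 2 * (1 - s ^ 2) / (s ^ 2 * (2 - s ^ 2)) := by
      simp only [hgdef]
      rw [h1, h2, hls, hA₂def]
    rw [hA₂expand]
    -- bound each piece
    have p1 : -(2 * (k + 1)) * M ≤ (k - 1) * (2 * Real.log s) := by
      rcases le_or_gt 1 k with h | h
      · have hsl : -1 ≤ s * Real.log s := by
          have h3 : -(1 / s) ≤ Real.log s := by linarith
          have h4 := mul_le_mul_of_nonneg_left h3 hs0.le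
          have h5 : s * -(1 / s) = -1 := by field_simp
          linarith [h5 ▸ h4]
        have h6 : (k - 1) * (2 * (s * Real.log s)) ≥ (k - 1) * (2 * (-1)) := by
          apply mul_le_mul_of_nonneg_left _ (by linarith : (0:ℝ) ≤ k - 1)
          linarith
        -- multiply goal by s > 0
        rw [show -(2 * (k + 1)) * M = (-(2 * (k + 1)) * M * s) / s by field_simp]
        rw [div_le_iff₀ hs0]
        have h7 : -(2 * (k + 1)) * M * s = -(2 * (k + 1)) := by
          have : M * s = 1 := by linarith [hsM, mul_comm s M]
          rw [mul_assoc, this, mul_one]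
        rw [h7]
        nlinarith
      · have hp : 0 ≤ (k - 1) * (2 * Real.log s) := by nlinarith
        nlinarith
    have p2 : -(k + 1) ≤ -((k - 1) * Real.log (2 - s ^ 2)) := by
      rcases le_or_gt 1 k with h | h
      · nlinarith
      · nlinarith
    have p3 : (0:ℝ) ≤ 2 * k / (2 - s ^ 2) := by positivity
    have p4 : (1 - s ^ 2) / s ^ 2 ≤ 2 * (1 - s ^ 2) / (s ^ 2 * (2 - s ^ 2)) := by
      rw [div_le_div_iff₀ (by positivity) (by positivity)]
      nlinarith [mul_nonneg (mul_nonneg (sub_nonneg.mpr hs2le) (sq_nonneg s)) (sq_nonneg s)]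
    have p5 : (1 - s ^ 2) / s ^ 2 = M ^ 2 - 1 := by
      rw [sub_div, hs2, div_self (by positivity : (s:ℝ) ^ 2 ≠ 0)]
    have hfinal : T + 1 ≤ M ^ 2 - 2 * (k + 1) * M - (k + 1) - 1 := by
      nlinarith [mul_le_mul_of_nonneg_left
        (show (1:ℝ) ≤ M - 2 * (k + 1) by linarith) hM0.le]
    rw [p5] at p4
    nlinarith
  -- existence via IVT
  have hgm : g m < T := by
    rcases eq_or_lt_of_le hm0 with h | h
    · rw [← h, hg0]; exact hT
    · have h0m : (0:ℝ) ∈ Icc (0:ℝ) m := ⟨le_refl _, hm0⟩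
      have hmm : m ∈ Icc (0:ℝ) m := ⟨hm0, le_refl _⟩
      have := hanti h0m hmm h
      rw [hg0] at this
      linarith
  have hivt : T ∈ g '' Icc m A₂ := by
    apply intermediate_value_Icc hA₂m
      (hcont.mono (fun x hx => ⟨le_trans hm0 hx.1, lt_of_le_of_lt hx.2 hA₂1⟩))
    exact ⟨hgm.le, hbig.le⟩
  obtain ⟨A₀, ⟨hA₀m, hA₀2⟩, hgA₀⟩ := hivt
  have hA₀mem : A₀ ∈ Ioo (0:ℝ) 1 := by
    constructor
    · rcases eq_or_lt_of_le (le_trans hm0 hA₀m) with h | h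
      · exfalso; rw [← h, hg0] at hgA₀; linarith
      · exact h
    · exact lt_of_le_of_lt hA₀2 hA₂1
  refine ⟨A₀, ⟨hA₀mem, by rw [hgeq A₀ hA₀mem]; exact hgA₀⟩, ?_⟩
  rintro A ⟨hAmem, hAeq⟩
  rw [hgeq A hAmem] at hAeq
  have hA : m < A := habove A hAmem hAeq
  have hA₀ : m < A₀ := habove A₀ hA₀mem hgA₀
  have h1 : A ∈ Ico m 1 := ⟨hA.le, hAmem.2⟩
  have h2 : A₀ ∈ Ico m 1 := ⟨hA₀.le, hA₀mem.2⟩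
  exact hmono.injOn h1 h2 (by rw [hAeq, hgA₀])

theorem eqA_existsUnique (μ c₀ c₁ c₂ : ℝ) (hμ : 0 < μ) (hc₀ : 0 < c₀) (hc₁ : 0 < c₁)
    (hc₂ : 0 < c₂) (B : ℝ) (hB : B ∈ Set.Ioo (0 : ℝ) 1) :
    ∃! A : ℝ, A ∈ Set.Ioo (0 : ℝ) 1 ∧
      (c₁ / (2 * c₀) - 1) * Real.log ((1 - A) / (1 + A))
        + (2 / (1 + A)) * (c₁ / (2 * c₀) + A / (1 - A)) = c₁ / (c₀ * (1 - B ^ 2)) := by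
  obtain ⟨hB0, hB1⟩ := hB
  have h1B : 0 < 1 - B ^ 2 := by nlinarith
  have hk : 0 < c₁ / (2 * c₀) := by positivity
  have hT : 2 * (c₁ / (2 * c₀)) < c₁ / (c₀ * (1 - B ^ 2)) := by
    have h1 : 2 * (c₁ / (2 * c₀)) = c₁ / c₀ := by field_simp
    rw [h1, div_lt_div_iff₀ hc₀ (by positivity)]
    nlinarith [mul_pos (mul_pos hc₁ hc₀) (pow_pos hB0 2)]
  exact eqA_key (c₁ / (2 * c₀)) (c₁ / (c₀ * (1 - B ^ 2))) hk hT
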